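/- Let S > 0 and let G : ℝ → ℝ be three times differentiable with G″(t) ≥ 0 and |G‴(t)| ≤ S · G″(t) for all t ∈ ℝ. Then for every η ≥ 0, (G″(0)/S²)·(e^{−Sη} + Sη − 1) ≤ G(η) − G(0) − η G′(0) ≤ (G″(0)/S²)·(e^{Sη} − Sη − 1). -/

import Mathlib

private lemma nonneg_of_hasDerivAt_aux (f f' : ℝ → ℝ) (hf : ∀ t, HasDerivAt f (f' t) t)
    (h0 : f 0 = 0) (hd : ∀ t, 0 ≤ t → 0 ≤ f' t) : ∀ t, 0 ≤ t → 0 ≤ f t := by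
  intro t ht
  have hmono : MonotoneOn f (Set.Ici (0:ℝ)) := by
    apply monotoneOn_of_deriv_nonneg (convex_Ici 0)
    · exact fun x _ => (hf x).continuousAt.continuousWithinAt
    · intro x _
      exact (hf x).differentiableAt.differentiableWithinAt
    · intro x hx
      rw [interior_Ici] at hx
      rw [(hf x).deriv]
      exact hd x (le_of_lt hx)
  have h := hmono Set.self_mem_Ici (Set.mem_Ici.2 ht) ht
  rw [h0] at h
  exact h

/-- self-concordance inequality.  If `G` is three times
differentiable with `G″ ≥ 0` and `|G‴| ≤ S·G″` everywhere, then for `η ≥ 0`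
the first-order Taylor remainder of `G` satisfies
`(G″(0)/S²)(e^{−Sη} + Sη − 1) ≤ G(η) − G(0) − η G′(0) ≤ (G″(0)/S²)(e^{Sη} − Sη − 1)`. -/
theorem selfconcordance_taylor_bounds (S : ℝ) (hS : 0 < S)
    (G G' G'' G''' : ℝ → ℝ)
    (hG : ∀ t, HasDerivAt G (G' t) t)
    (hG' : ∀ t, HasDerivAt G' (G'' t) t)
    (hG'' : ∀ t, HasDerivAt G'' (G''' t) t)
    (hconv : ∀ t, 0 ≤ G'' t)
    (hsc : ∀ t, |G''' t| ≤ S * G'' t) :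
    ∀ η : ℝ, 0 ≤ η →
      (G'' 0 / S ^ 2) * (Real.exp (-(S * η)) + S * η - 1) ≤
          G η - G 0 - η * G' 0 ∧
        G η - G 0 - η * G' 0 ≤
          (G'' 0 / S ^ 2) * (Real.exp (S * η) - S * η - 1) := by
  have hS2 : (S:ℝ)^2 ≠ 0 := pow_ne_zero _ (ne_of_gt hS)
  have hsc1 : ∀ t, G''' t ≤ S * G'' t := fun t => (abs_le.mp (hsc t)).2
  have hsc2 : ∀ t, -(S * G'' t) ≤ G''' t := fun t => (abs_le.mp (hsc t)).1
  -- exp derivative helpers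
  have hep : ∀ t : ℝ, HasDerivAt (fun t => Real.exp (S * t)) (Real.exp (S * t) * S) t := by
    intro t
    exact ((hasDerivAt_id t).const_mul S).exp.congr_deriv (by simp)
  have hen : ∀ t : ℝ, HasDerivAt (fun t => Real.exp (-(S * t))) (Real.exp (-(S * t)) * (-S)) t := by
    intro t
    exact (((hasDerivAt_id t).const_mul S).neg).exp.congr_deriv (by simp)
  -- Step 1: upper bound on G''
  have hub : ∀ t, 0 ≤ t → G'' t ≤ G'' 0 * Real.exp (S * t) := by
    intro t ht
    have key : 0 ≤ G'' 0 - G'' t * Real.exp (-(S * t)) := by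
      apply nonneg_of_hasDerivAt_aux
        (fun t => G'' 0 - G'' t * Real.exp (-(S * t)))
        (fun t => -(G''' t * Real.exp (-(S * t)) + G'' t * (Real.exp (-(S * t)) * (-S))))
        ?_ ?_ ?_ t ht
      · intro u
        exact ((hasDerivAt_const u (G'' 0)).sub ((hG'' u).mul (hen u))).congr_deriv
          (by ring)
      · simp
      · intro u _
        have he := Real.exp_pos (-(S * u))
        nlinarith [hsc1 u, he.le]
    have he := Real.exp_pos (S * t)
    have hmul : Real.exp (-(S * t)) * Real.exp (S * t) = 1 := by
      rw [← Real.exp_add]; simp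
    have h2 : G'' t * Real.exp (-(S * t)) * Real.exp (S * t) = G'' t := by
      rw [mul_assoc, hmul, mul_one]
    have h3 := mul_le_mul_of_nonneg_right
      (by linarith : G'' t * Real.exp (-(S * t)) ≤ G'' 0) he.le
    linarith [h2 ▸ h3]
  -- Step 1': lower bound on G''
  have hlb : ∀ t, 0 ≤ t → G'' 0 * Real.exp (-(S * t)) ≤ G'' t := by
    intro t ht
    have key : 0 ≤ G'' t * Real.exp (S * t) - G'' 0 := by
      apply nonneg_of_hasDerivAt_aux
        (fun t => G'' t * Real.exp (S * t) - G'' 0)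
        (fun t => G''' t * Real.exp (S * t) + G'' t * (Real.exp (S * t) * S))
        ?_ ?_ ?_ t ht
      · intro u
        exact (((hG'' u).mul (hep u)).sub (hasDerivAt_const u (G'' 0))).congr_deriv
          (by ring)
      · simp
      · intro u _
        have he := Real.exp_pos (S * u)
        nlinarith [hsc2 u, he.le]
    have he := Real.exp_pos (S * t)
    have hen' := Real.exp_pos (-(S * t))
    have hmul : Real.exp (-(S * t)) * Real.exp (S * t) = 1 := by
      rw [← Real.exp_add]; simp
    have h3 := mul_le_mul_of_nonneg_right
      (by linarith : G'' 0 ≤ G'' t * Real.exp (S * t)) hen'.le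
    have h2 : G'' t * Real.exp (S * t) * Real.exp (-(S * t)) = G'' t := by
      rw [mul_assoc, mul_comm (Real.exp (S * t)), hmul, mul_one]
    linarith [h2 ▸ h3]
  intro η hη
  constructor
  · -- lower bound
    have key : 0 ≤ (G η - G 0 - η * G' 0) -
        (G'' 0 / S ^ 2) * (Real.exp (-(S * η)) + S * η - 1) := by
      apply nonneg_of_hasDerivAt_aux
        (fun t => (G t - G 0 - t * G' 0) -
          (G'' 0 / S ^ 2) * (Real.exp (-(S * t)) + S * t - 1))
        (fun t => (G' t - G' 0) -
          (G'' 0 / S ^ 2) * (Real.exp (-(S * t)) * (-S) + S))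
        ?_ ?_ ?_ η hη
      · intro u
        have h1 : HasDerivAt (fun t : ℝ => G t - G 0 - t * G' 0) (G' u - G' 0) u :=
          (((hG u).sub (hasDerivAt_const u (G 0))).sub
            ((hasDerivAt_id u).mul_const (G' 0))).congr_deriv (by ring)
        have h2 : HasDerivAt (fun t : ℝ => Real.exp (-(S * t)) + S * t - 1)
            (Real.exp (-(S * u)) * (-S) + S) u :=
          (((hen u).add ((hasDerivAt_id u).const_mul S)).sub
            (hasDerivAt_const u (1:ℝ))).congr_deriv (by simp)
        exact (h1.sub (h2.const_mul (G'' 0 / S ^ 2))).congr_deriv (by dsimp only)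
      · simp
      · intro u hu
        have key2 : 0 ≤ (G' u - G' 0) -
            (G'' 0 / S ^ 2) * (Real.exp (-(S * u)) * (-S) + S) := by
          apply nonneg_of_hasDerivAt_aux
            (fun t => (G' t - G' 0) -
              (G'' 0 / S ^ 2) * (Real.exp (-(S * t)) * (-S) + S))
            (fun t => G'' t - (G'' 0 / S ^ 2) * (Real.exp (-(S * t)) * (-S) * (-S)))
            ?_ ?_ ?_ u hu
          · intro v
            have h2 : HasDerivAt (fun t : ℝ => Real.exp (-(S * t)) * (-S) + S)
                (Real.exp (-(S * v)) * (-S) * (-S)) v :=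
              (((hen v).mul_const (-S)).add (hasDerivAt_const v S)).congr_deriv (by ring)
            exact ((((hG' v).sub (hasDerivAt_const v (G' 0))).sub
              (h2.const_mul (G'' 0 / S ^ 2)))).congr_deriv (by ring)
          · simp
          · intro w hw
            have h := hlb w hw
            have heq : (G'' 0 / S ^ 2) * (Real.exp (-(S * w)) * (-S) * (-S))
                = G'' 0 * Real.exp (-(S * w)) := by
              field_simp
            rw [heq]
            linarith
        linarith
    linarith
  · -- upper bound
    have key : 0 ≤ (G'' 0 / S ^ 2) * (Real.exp (S * η) - S * η - 1) -
        (G η - G 0 - η * G' 0) := by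
      apply nonneg_of_hasDerivAt_aux
        (fun t => (G'' 0 / S ^ 2) * (Real.exp (S * t) - S * t - 1) -
          (G t - G 0 - t * G' 0))
        (fun t => (G'' 0 / S ^ 2) * (Real.exp (S * t) * S - S) - (G' t - G' 0))
        ?_ ?_ ?_ η hη
      · intro u
        have h1 : HasDerivAt (fun t : ℝ => G t - G 0 - t * G' 0) (G' u - G' 0) u :=
          (((hG u).sub (hasDerivAt_const u (G 0))).sub
            ((hasDerivAt_id u).mul_const (G' 0))).congr_deriv (by ring)
        have h2 : HasDerivAt (fun t : ℝ => Real.exp (S * t) - S * t - 1)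
            (Real.exp (S * u) * S - S) u :=
          (((hep u).sub ((hasDerivAt_id u).const_mul S)).sub
            (hasDerivAt_const u (1:ℝ))).congr_deriv (by simp)
        exact ((h2.const_mul (G'' 0 / S ^ 2)).sub h1).congr_deriv (by dsimp only)
      · simp
      · intro u hu
        have key2 : 0 ≤ (G'' 0 / S ^ 2) * (Real.exp (S * u) * S - S) - (G' u - G' 0) := by
          apply nonneg_of_hasDerivAt_aux
            (fun t => (G'' 0 / S ^ 2) * (Real.exp (S * t) * S - S) - (G' t - G' 0))
            (fun t => (G'' 0 / S ^ 2) * (Real.exp (S * t) * S * S) - G'' t)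
            ?_ ?_ ?_ u hu
          · intro v
            have h2 : HasDerivAt (fun t : ℝ => Real.exp (S * t) * S - S)
                (Real.exp (S * v) * S * S) v :=
              (((hep v).mul_const S).sub (hasDerivAt_const v S)).congr_deriv (by ring)
            exact ((h2.const_mul (G'' 0 / S ^ 2)).sub
              ((hG' v).sub (hasDerivAt_const v (G' 0)))).congr_deriv (by ring)
          · simp
          · intro w hw
            have h := hub w hw
            have heq : (G'' 0 / S ^ 2) * (Real.exp (S * w) * S * S)
                = G'' 0 * Real.exp (S * w) := by
              field_simp
            rw [heq]
            linarith
        linarith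
    linarith
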